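/- Under the higher order adaptive control tuner (with Q = 2I and μ = 2γ‖Pb‖²/β), for all T ≥ 0: ∫₀^T ‖e(t)‖² dt ≤ V(0), where V = (1/γ)‖ϑ - θ*‖² + (1/γ)‖θ - ϑ‖² + eᵀPe. That is, the continuous-time regret in tracking error is uniformly bounded (O(1)). -/

import Mathlib

open Matrix

local notation "⟪" x ", " y "⟫" => @inner ℝ _ _ x y

private lemma helpA {n : ℕ} (M N : Matrix (Fin n) (Fin n) ℝ) (x : EuclideanSpace ℝ (Fin n)) :
    Matrix.toEuclideanLin M (Matrix.toEuclideanLin N x) = Matrix.toEuclideanLin (M * N) x := by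
  simp [Matrix.toEuclideanLin_apply, Matrix.mulVec_mulVec]

private lemma helpB {n : ℕ} (M : Matrix (Fin n) (Fin n) ℝ) (x y : EuclideanSpace ℝ (Fin n)) :
    ⟪Matrix.toEuclideanLin M x, y⟫ = ⟪x, Matrix.toEuclideanLin Mᵀ y⟫ := by
  have h : Mᵀ = Mᴴ := by ext i j; simp [Matrix.conjTranspose_apply]
  rw [h, Matrix.toEuclideanLin_conjTranspose_eq_adjoint, LinearMap.adjoint_inner_right]

private lemma helpC {n : ℕ} (x : EuclideanSpace ℝ (Fin n)) :
    Matrix.toEuclideanLin (1 : Matrix (Fin n) (Fin n) ℝ) x = x := by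
  simp [Matrix.toEuclideanLin_apply]

private lemma helpD {n : ℕ} {P : Matrix (Fin n) (Fin n) ℝ} (hP : P.PosDef)
    (x : EuclideanSpace ℝ (Fin n)) : 0 ≤ ⟪x, Matrix.toEuclideanLin P x⟫ := by
  have := hP.posSemidef.re_dotProduct_nonneg ((WithLp.equiv 2 _) x)
  simpa [EuclideanSpace.inner_eq_star_dotProduct, Matrix.toEuclideanLin_apply,
    dotProduct, Matrix.mulVec, mul_comm] using this

set_option maxHeartbeats 1000000 in
theorem stmt_14 {n d : ℕ} (β γ : ℝ) (hβ : 0 < β) (hγ : 0 < γ)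
    (A P : Matrix (Fin n) (Fin n) ℝ) (hP : P.PosDef)
    (hLyap : Aᵀ * P + P * A = -((2 : ℝ) • (1 : Matrix (Fin n) (Fin n) ℝ)))
    (b : EuclideanSpace ℝ (Fin n))
    (φ : ℝ → EuclideanSpace ℝ (Fin d)) (hφ : Continuous φ)
    (θstar : EuclideanSpace ℝ (Fin d))
    (e : ℝ → EuclideanSpace ℝ (Fin n)) (θ ϑ : ℝ → EuclideanSpace ℝ (Fin d))
    (Nt : ℝ → ℝ)
    (hNt : Nt = fun t => 1 + (2 * γ * ‖Matrix.toEuclideanLin P b‖ ^ 2 / β) * ‖φ t‖ ^ 2)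
    (he : ∀ t : ℝ, HasDerivAt e
      (Matrix.toEuclideanLin A (e t) + ⟪θ t - θstar, φ t⟫ • b) t)
    (hϑ : ∀ t : ℝ, HasDerivAt ϑ ((-γ * ⟪e t, Matrix.toEuclideanLin P b⟫) • φ t) t)
    (hθ : ∀ t : ℝ, HasDerivAt θ ((-(β * Nt t)) • (θ t - ϑ t)) t) :
    ∀ T : ℝ, 0 ≤ T →
      ∫ t in (0 : ℝ)..T, ‖e t‖ ^ 2
        ≤ (1 / γ) * ‖ϑ 0 - θstar‖ ^ 2 + (1 / γ) * ‖θ 0 - ϑ 0‖ ^ 2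
          + ⟪e 0, Matrix.toEuclideanLin P (e 0)⟫ := by
  set Pb : EuclideanSpace ℝ (Fin n) := Matrix.toEuclideanLin P b with hPb
  set V : ℝ → ℝ := fun t => (1 / γ) * ‖ϑ t - θstar‖ ^ 2 + (1 / γ) * ‖θ t - ϑ t‖ ^ 2
      + ⟪e t, Matrix.toEuclideanLin P (e t)⟫ with hV
  set dV : ℝ → ℝ := fun t => -(2 * ‖e t‖ ^ 2) + 4 * ⟪e t, Pb⟫ * ⟪φ t, θ t - ϑ t⟫
      - (2 * β / γ) * Nt t * ‖θ t - ϑ t‖ ^ 2 with hdVdef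
  -- continuous linear map version of P
  set LP : EuclideanSpace ℝ (Fin n) →L[ℝ] EuclideanSpace ℝ (Fin n) :=
    LinearMap.toContinuousLinearMap (Matrix.toEuclideanLin P) with hLP
  have hLPapp : ∀ x, LP x = Matrix.toEuclideanLin P x := fun _ => rfl
  -- derivative of V
  have hVd : ∀ t, HasDerivAt V (dV t) t := by
    intro t
    have hv : HasDerivAt (fun t => ϑ t - θstar) ((-γ * ⟪e t, Pb⟫) • φ t) t :=
      (hϑ t).sub_const θstar
    have hu : HasDerivAt (fun t => θ t - ϑ t)
        ((-(β * Nt t)) • (θ t - ϑ t) - (-γ * ⟪e t, Pb⟫) • φ t) t := (hθ t).sub (hϑ t)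
    have hv2 : HasDerivAt (fun t => ‖ϑ t - θstar‖ ^ 2)
        (⟪ϑ t - θstar, (-γ * ⟪e t, Pb⟫) • φ t⟫ + ⟪(-γ * ⟪e t, Pb⟫) • φ t, ϑ t - θstar⟫) t := by
      have := hv.inner ℝ hv
      simpa only [real_inner_self_eq_norm_sq] using this
    have hu2 : HasDerivAt (fun t => ‖θ t - ϑ t‖ ^ 2)
        (⟪θ t - ϑ t, (-(β * Nt t)) • (θ t - ϑ t) - (-γ * ⟪e t, Pb⟫) • φ t⟫
          + ⟪(-(β * Nt t)) • (θ t - ϑ t) - (-γ * ⟪e t, Pb⟫) • φ t, θ t - ϑ t⟫) t := by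
      have := hu.inner ℝ hu
      simpa only [real_inner_self_eq_norm_sq] using this
    have hE : HasDerivAt (fun t => LP (e t))
        (LP (Matrix.toEuclideanLin A (e t) + ⟪θ t - θstar, φ t⟫ • b)) t :=
      LP.hasFDerivAt.comp_hasDerivAt t (he t)
    have hPe : HasDerivAt (fun t => ⟪e t, Matrix.toEuclideanLin P (e t)⟫)
        (⟪e t, LP (Matrix.toEuclideanLin A (e t) + ⟪θ t - θstar, φ t⟫ • b)⟫
          + ⟪Matrix.toEuclideanLin A (e t) + ⟪θ t - θstar, φ t⟫ • b, LP (e t)⟫) t := by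
      have := (he t).inner ℝ hE
      simpa only [hLPapp] using this
    have := ((hv2.const_mul (1 / γ)).add (hu2.const_mul (1 / γ))).add hPe
    convert this using 1
    case e'_4 => rfl
    case e'_5 => rfl
    case e'_8 => rfl
    -- algebraic identity for the derivative value
    have hLyap' : P * A + Aᵀ * P = -((2 : ℝ) • (1 : Matrix (Fin n) (Fin n) ℝ)) := by
      rw [add_comm]; exact hLyap
    have hLy : ⟪e t, Matrix.toEuclideanLin P (Matrix.toEuclideanLin A (e t))⟫
        + ⟪Matrix.toEuclideanLin A (e t), Matrix.toEuclideanLin P (e t)⟫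
        = -(2 * ‖e t‖ ^ 2) := by
      rw [helpB, helpA, helpA, ← inner_add_right, ← LinearMap.add_apply, ← map_add, hLyap']
      simp only [map_neg, _root_.map_smul, LinearMap.neg_apply, LinearMap.smul_apply, helpC]
      rw [inner_neg_right, real_inner_smul_right, real_inner_self_eq_norm_sq]
    have hbP : ⟪b, Matrix.toEuclideanLin P (e t)⟫ = ⟪e t, Pb⟫ := by
      have h1 : Pᵀ = P := by
        have := hP.isHermitian.eq
        rw [show Pᴴ = Pᵀ from by ext i j; simp [Matrix.conjTranspose_apply]] at this
        exact this
      rw [hPb, ← h1, ← helpB, real_inner_comm, h1]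
    have hsplit : θ t - θstar = (θ t - ϑ t) + (ϑ t - θstar) := by abel
    rw [hsplit]
    set u := θ t - ϑ t with hu'
    set v := ϑ t - θstar with hv'
    simp only [hLPapp, map_add, _root_.map_smul, inner_add_left, inner_add_right,
      inner_sub_left, inner_sub_right, real_inner_smul_left, real_inner_smul_right,
      real_inner_self_eq_norm_sq]
    rw [← hPb, hbP, hdVdef]
    simp only [real_inner_comm (φ t) u, real_inner_comm (φ t) v]
    set c := ⟪e t, Pb⟫
    set pu := ⟪u, φ t⟫
    set pv := ⟪v, φ t⟫
    set q1 := ⟪e t, Matrix.toEuclideanLin P (Matrix.toEuclideanLin A (e t))⟫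
    set q2 := ⟪Matrix.toEuclideanLin A (e t), Matrix.toEuclideanLin P (e t)⟫
    field_simp
    linear_combination (-γ) * hLy
  -- the derivative is at most -‖e‖²
  have hdVle : ∀ t, dV t + ‖e t‖ ^ 2 ≤ 0 := by
    intro t
    have hc : |⟪e t, Pb⟫| ≤ ‖e t‖ * ‖Pb‖ := abs_real_inner_le_norm _ _
    have hp : |⟪φ t, θ t - ϑ t⟫| ≤ ‖φ t‖ * ‖θ t - ϑ t‖ := abs_real_inner_le_norm _ _
    have h4 : ⟪e t, Pb⟫ * ⟪φ t, θ t - ϑ t⟫ ≤ (‖e t‖ * ‖Pb‖) * (‖φ t‖ * ‖θ t - ϑ t‖) := by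
      calc ⟪e t, Pb⟫ * ⟪φ t, θ t - ϑ t⟫ ≤ |⟪e t, Pb⟫ * ⟪φ t, θ t - ϑ t⟫| := le_abs_self _
        _ = |⟪e t, Pb⟫| * |⟪φ t, θ t - ϑ t⟫| := abs_mul _ _
        _ ≤ (‖e t‖ * ‖Pb‖) * (‖φ t‖ * ‖θ t - ϑ t‖) :=
            mul_le_mul hc hp (abs_nonneg _) (by positivity)
    have hNtv : Nt t = 1 + (2 * γ * ‖Pb‖ ^ 2 / β) * ‖φ t‖ ^ 2 := by rw [hNt]
    have hγ' : γ ≠ 0 := ne_of_gt hγ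
    have hβ' : β ≠ 0 := ne_of_gt hβ
    have key : (2 * β / γ) * Nt t * ‖θ t - ϑ t‖ ^ 2
        = (2 * β / γ) * ‖θ t - ϑ t‖ ^ 2 + 4 * ‖Pb‖ ^ 2 * ‖φ t‖ ^ 2 * ‖θ t - ϑ t‖ ^ 2 := by
      rw [hNtv]; field_simp; ring
    rw [hdVdef]; dsimp only
    rw [key]
    nlinarith [sq_nonneg (‖e t‖ - 2 * ‖Pb‖ * ‖φ t‖ * ‖θ t - ϑ t‖),
      div_nonneg (by positivity : (0:ℝ) ≤ 2 * β) hγ.le, sq_nonneg ‖θ t - ϑ t‖,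
      mul_nonneg (div_nonneg (by positivity : (0:ℝ) ≤ 2 * β) hγ.le) (sq_nonneg ‖θ t - ϑ t‖)]
  -- integrate
  have hediff : Differentiable ℝ e := fun t => (he t).differentiableAt
  have hecont : Continuous e := hediff.continuous
  have he2cont : Continuous fun t => ‖e t‖ ^ 2 := by fun_prop
  set g : ℝ → ℝ := fun t => V t + ∫ s in (0:ℝ)..t, ‖e s‖ ^ 2 with hg
  have hgd : ∀ t, HasDerivAt g (dV t + ‖e t‖ ^ 2) t := fun t =>
    (hVd t).add (he2cont.integral_hasStrictDerivAt 0 t).hasDerivAt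
  have hmono : Antitone g := antitone_of_deriv_nonpos
    (fun t => (hgd t).differentiableAt) (fun t => by rw [(hgd t).deriv]; exact hdVle t)
  intro T hT
  have h1 : g T ≤ g 0 := hmono hT
  have h2 : g 0 = V 0 := by simp [hg]
  have hVT : 0 ≤ V T := by
    have h3 := helpD hP (e T)
    have h4 : (0:ℝ) ≤ (1 / γ) * ‖ϑ T - θstar‖ ^ 2 := by positivity
    have h5 : (0:ℝ) ≤ (1 / γ) * ‖θ T - ϑ T‖ ^ 2 := by positivity
    rw [hV]; dsimp only
    linarith
  have h6 : ∫ t in (0:ℝ)..T, ‖e t‖ ^ 2 = g T - V T := by rw [hg]; ring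
  have h7 : V 0 = (1 / γ) * ‖ϑ 0 - θstar‖ ^ 2 + (1 / γ) * ‖θ 0 - ϑ 0‖ ^ 2
      + ⟪e 0, Matrix.toEuclideanLin P (e 0)⟫ := by rw [hV]
  rw [h6, ← h7]
  linarith
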